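/- Let D be a self-adjoint nonnegative operator, δ > 0, α > 0, τ > 0, σ ≥ 1/2, and suppose δ (w^{n+1} − w^n)/τ + D(α w^n_σ + t^n_σ (w^{n+1} − w^n)/τ) = 0 with t^n_σ ≥ 0 and w^n_σ = σ w^{n+1} + (1−σ) w^n. Then ⟨(w^{n+1} − w^n)/τ, w^n_σ⟩ ≤ 0. -/

import Mathlib

open Real

theorem two_level_scheme_key_inequality {V : Type*} [NormedAddCommGroup V]
    [InnerProductSpace ℝ V] [FiniteDimensional ℝ V]
    (D : V →ₗ[ℝ] V) (hDsym : ∀ u v : V, (inner ℝ (D u) v : ℝ) = inner ℝ u (D v))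
    (hDpos : ∀ u : V, 0 ≤ (inner ℝ (D u) u : ℝ))
    (δ α τ σ tσ : ℝ) (hδ : 0 < δ) (hα : 0 < α) (hτ : 0 < τ) (hσ : 1 / 2 ≤ σ)
    (htσ : 0 ≤ tσ) (wn wn1 : V)
    (hscheme : δ • (τ⁻¹ • (wn1 - wn)) +
        D (α • (σ • wn1 + (1 - σ) • wn) + tσ • (τ⁻¹ • (wn1 - wn))) = 0) :
    (inner ℝ (τ⁻¹ • (wn1 - wn)) (σ • wn1 + (1 - σ) • wn) : ℝ) ≤ 0 := by
  set v : V := τ⁻¹ • (wn1 - wn) with hv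
  set w : V := σ • wn1 + (1 - σ) • wn with hw
  set u : V := α • w + tσ • v with hu
  have key : (0:ℝ) = inner ℝ (δ • v + D u) u := by rw [hscheme]; simp
  have expand : (0:ℝ) = δ * α * inner ℝ v w + δ * tσ * inner ℝ v v + inner ℝ (D u) u := by
    rw [key, inner_add_left, hu, inner_smul_left, inner_add_right, inner_smul_right,
      inner_smul_right]
    simp only [conj_trivial]
    ring
  have h1 : δ * α * (inner ℝ v w : ℝ) ≤ 0 := by
    have := hDpos u
    have h2 : (0:ℝ) ≤ δ * tσ * inner ℝ v v :=
      mul_nonneg (mul_nonneg hδ.le htσ) (real_inner_self_nonneg)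
    linarith
  have hδα : 0 < δ * α := mul_pos hδ hα
  nlinarith [h1]
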